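/- For any complex polynomial p(z) = Σ_{k=0}^n a_k z^k of degree n ≥ 1, the maximum of |p(z)| over the unit circle satisfies max_{|z|=1} |p(z)| ≥ |a_0| + |a_n|. -/

import Mathlib

open Finset

theorem max_modulus_ge_coeff_sum (n : ℕ) (hn : 1 ≤ n) (a : ℕ → ℂ)
    (p : ℂ → ℂ) (hp : ∀ z, p z = ∑ k ∈ range (n + 1), a k * z ^ k) :
    ∃ z : ℂ, ‖z‖ = 1 ∧
      ‖a 0‖ + ‖a n‖ ≤ ‖p z‖ := by
  have hn0 : n ≠ 0 := by omega
  -- choose a unit u aligned with a 0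
  set u : ℂ := if a 0 = 0 then 1 else a 0 / ((‖a 0‖ : ℝ) : ℂ) with hu_def
  have hu1 : ‖u‖ = 1 := by
    by_cases h : a 0 = 0
    · simp [hu_def, h]
    · simp [hu_def, h, norm_div, Complex.norm_real,
        div_self (show ‖a 0‖ ≠ 0 by simpa using h)]
  have ha0u : a 0 = ((‖a 0‖ : ℝ) : ℂ) * u := by
    by_cases h : a 0 = 0
    · simp [h]
    · have : ((‖a 0‖ : ℝ) : ℂ) ≠ 0 := by simpa using h
      rw [hu_def, if_neg h]
      field_simp
  -- choose a unit w with a n * w = |a n| * u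
  set w : ℂ := if a n = 0 then u else ((‖a n‖ : ℝ) : ℂ) * u / a n with hw_def
  have hw1 : ‖w‖ = 1 := by
    by_cases h : a n = 0
    · simp [hw_def, h, hu1]
    · simp [hw_def, h, norm_div, norm_mul, hu1, Complex.norm_real,
        div_self (show ‖a n‖ ≠ 0 by simpa using h)]
  have hanw : a n * w = ((‖a n‖ : ℝ) : ℂ) * u := by
    by_cases h : a n = 0
    · simp [hw_def, h]
    · rw [hw_def, if_neg h]
      field_simp
  -- take an n-th root z of w
  obtain ⟨z, hz⟩ : ∃ z : ℂ, z ^ n = w := by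
    rcases IsAlgClosed.exists_pow_nat_eq w hn with ⟨z, hz⟩
    exact ⟨z, hz⟩
  have hz1 : ‖z‖ = 1 := by
    have h1 : ‖z‖ ^ n = 1 := by
      rw [← norm_pow, hz, hw1]
    have h2 := (pow_eq_one_iff_of_ne_zero (a := ‖z‖) hn0).mp h1
    rcases h2 with h | ⟨h, _⟩
    · exact h
    · nlinarith [norm_nonneg z]
  -- primitive root
  obtain ⟨ζ, hζ⟩ : ∃ ζ : ℂ, IsPrimitiveRoot ζ n := ⟨_, Complex.isPrimitiveRoot_exp n hn0⟩
  have hζn : ζ ^ n = 1 := hζ.pow_eq_one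
  have hζabs : ‖ζ‖ = 1 := by
    have h1 : ‖ζ‖ ^ n = 1 := by rw [← norm_pow, hζn, norm_one]
    have h2 := (pow_eq_one_iff_of_ne_zero (a := ‖ζ‖) hn0).mp h1
    rcases h2 with h | ⟨h, _⟩
    · exact h
    · nlinarith [norm_nonneg ζ]
  -- geometric sum vanishing
  have hS : ∀ k : ℕ, ζ ^ k ≠ 1 → ∑ j ∈ range n, (ζ ^ k) ^ j = 0 := by
    intro k hk
    rw [geom_sum_eq hk]
    have : (ζ ^ k) ^ n = 1 := by
      rw [← pow_mul, mul_comm, pow_mul, hζn, one_pow]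
    rw [this]
    simp
  -- the averaging identity
  have key : ∑ j ∈ range n, p (ζ ^ j * z) = (n : ℂ) * (a 0 + a n * z ^ n) := by
    have : ∀ j, p (ζ ^ j * z) = ∑ k ∈ range (n + 1), a k * z ^ k * (ζ ^ k) ^ j := by
      intro j
      rw [hp]
      apply Finset.sum_congr rfl
      intro k _
      ring_nf
    simp only [this]
    rw [Finset.sum_comm]
    have hterm : ∀ k ∈ range (n + 1),
        ∑ j ∈ range n, a k * z ^ k * (ζ ^ k) ^ j
          = a k * z ^ k * ∑ j ∈ range n, (ζ ^ k) ^ j := by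
      intro k _
      rw [Finset.mul_sum]
    rw [Finset.sum_congr rfl hterm]
    rw [Finset.sum_range_succ]
    have hlast : a n * z ^ n * ∑ j ∈ range n, (ζ ^ n) ^ j = a n * z ^ n * n := by
      rw [hζn]
      simp
    rw [hlast]
    have hfirst : ∑ k ∈ range n, a k * z ^ k * ∑ j ∈ range n, (ζ ^ k) ^ j
        = a 0 * z ^ 0 * n := by
      rw [Finset.sum_eq_single 0]
      · simp
      · intro k hk hk0
        have hkn : k < n := Finset.mem_range.mp hk
        have : ζ ^ k ≠ 1 := by
          intro h
          have := (hζ.pow_eq_one_iff_dvd k).mp h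
          have : n ≤ k := Nat.le_of_dvd (Nat.pos_of_ne_zero hk0) this
          omega
        rw [hS k this]
        ring
      · intro h
        exact absurd (Finset.mem_range.mpr (Nat.pos_of_ne_zero hn0)) h
    rw [hfirst]
    ring
  -- evaluate a 0 + a n * z ^ n
  have hval : a 0 + a n * z ^ n
      = ((‖a 0‖ + ‖a n‖ : ℝ) : ℂ) * u := by
    rw [hz, hanw]
    conv_lhs => rw [ha0u]
    push_cast
    ring
  -- pick the maximizing j
  obtain ⟨j0, hj0mem, hj0max⟩ :=
    Finset.exists_max_image (range n) (fun j => ‖p (ζ ^ j * z)‖)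
      ⟨0, Finset.mem_range.mpr (Nat.pos_of_ne_zero hn0)⟩
  refine ⟨ζ ^ j0 * z, ?_, ?_⟩
  · rw [norm_mul, norm_pow, hζabs, hz1, one_pow, one_mul]
  · have h1 : (n : ℝ) * (‖a 0‖ + ‖a n‖)
        = ‖∑ j ∈ range n, p (ζ ^ j * z)‖ := by
      rw [key, hval, norm_mul, norm_mul, hu1, mul_one, Complex.norm_natCast,
        Complex.norm_real, Real.norm_eq_abs, abs_of_nonneg]
      positivity
    have h2 : ‖∑ j ∈ range n, p (ζ ^ j * z)‖
        ≤ ∑ j ∈ range n, ‖p (ζ ^ j * z)‖ :=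
      norm_sum_le _ _
    have h3 : ∑ j ∈ range n, ‖p (ζ ^ j * z)‖
        ≤ (n : ℝ) * ‖p (ζ ^ j0 * z)‖ := by
      calc ∑ j ∈ range n, ‖p (ζ ^ j * z)‖
          ≤ ∑ j ∈ range n, ‖p (ζ ^ j0 * z)‖ :=
            Finset.sum_le_sum (fun j hj => hj0max j hj)
        _ = (n : ℝ) * ‖p (ζ ^ j0 * z)‖ := by
            rw [Finset.sum_const, Finset.card_range, nsmul_eq_mul]
    have hnpos : (0 : ℝ) < n := by positivity
    nlinarith [h1, h2, h3]
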